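/- For the path graph with a leader set S = {ℓ_1 < ... < ℓ_k}, the total steady-state variance satisfies R(S) = (1/2)tr(L_{(0,ℓ_1)}^{-1}) + (1/2)Σ_{i=1}^{k-1} tr(L_{(ℓ_i,ℓ_{i+1})}^{-1}) + (1/2)tr(L_{(ℓ_k,n+1)}^{-1}), where L_{(a,b)} denotes the principal submatrix of L indexed by {a+1,...,b-1}, and the trace of the inverse of a 0×0 matrix is 0. -/

import Mathlib

/-- Weighted Laplacian of the path graph on `Fin n` where `w i` is the weight of
edge `(i, i+1)`. -/
def pathLaplacian (n : ℕ) (w : ℕ → ℝ) : Matrix (Fin n) (Fin n) ℝ :=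
  Matrix.of fun i j =>
    if i = j then (if i.1 + 1 < n then w i.1 else 0) + (if i.1 = 0 then 0 else w (i.1 - 1))
    else if j.1 = i.1 + 1 then -(w i.1)
    else if i.1 = j.1 + 1 then -(w j.1) else 0

/-- Lower index (inclusive, 0-based) of the `i`-th inter-leader interval. -/
def blockLo {n k : ℕ} (ℓ : Fin k → Fin n) (i : Fin (k + 1)) : ℕ :=
  if h : i.1 = 0 then 0 else (ℓ ⟨i.1 - 1, by have := i.2; omega⟩).1 + 1

/-- Upper index (exclusive, 0-based) of the `i`-th inter-leader interval. -/
def blockHi {n k : ℕ} (ℓ : Fin k → Fin n) (i : Fin (k + 1)) : ℕ :=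
  if h : i.1 < k then (ℓ ⟨i.1, h⟩).1 else n

open Finset Matrix

noncomputable def dEnt (n : ℕ) (w : ℕ → ℝ) (s : ℕ) : ℝ :=
  (if s + 1 < n then w s else 0) + (if s = 0 then 0 else w (s - 1))

/-- generic entry of the path Laplacian -/
noncomputable def ent (n : ℕ) (w : ℕ → ℝ) (s t : ℕ) : ℝ :=
  if s = t then dEnt n w s
  else if t = s + 1 then -(w s) else if s = t + 1 then -(w t) else 0

lemma row_sum (n : ℕ) (w : ℕ → ℝ) (a b : ℕ) (y : ℕ → ℝ) {s : ℕ} (hs : s ∈ Ico a b) :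
    ∑ t ∈ Ico a b, ent n w s t * y t
      = dEnt n w s * y s - (if s + 1 < b then w s * y (s+1) else 0)
        - (if a < s then w (s-1) * y (s-1) else 0) := by
  obtain ⟨ha, hb'⟩ := Finset.mem_Ico.mp hs
  rcases Nat.eq_zero_or_pos s with hs0 | hs0
  · subst hs0
    have hpt : ∀ t ∈ Ico a b, ent n w 0 t * y t =
        (if t = 0 then dEnt n w 0 * y t else 0) + (if t = 1 then -(w 0 * y t) else 0) := by
      intro t ht
      unfold ent
      split_ifs <;> (first | ring1 | contradiction | (exfalso; omega))
    rw [Finset.sum_congr rfl hpt, Finset.sum_add_distrib, Finset.sum_ite_eq',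
      Finset.sum_ite_eq']
    simp only [Finset.mem_Ico]
    split_ifs <;> (first | ring1 | contradiction | (exfalso; omega))
  · have hpt : ∀ t ∈ Ico a b, ent n w s t * y t =
        (if t = s then dEnt n w s * y t else 0) + (if t = s + 1 then -(w s * y t) else 0)
          + (if t = s - 1 then -(w t * y t) else 0) := by
      intro t ht
      unfold ent
      split_ifs <;> (first | ring1 | contradiction | (exfalso; omega))
    rw [Finset.sum_congr rfl hpt, Finset.sum_add_distrib, Finset.sum_add_distrib,
      Finset.sum_ite_eq', Finset.sum_ite_eq', Finset.sum_ite_eq']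
    simp only [Finset.mem_Ico]
    have hw1 : s - 1 + 1 = s := by omega
    split_ifs <;> (try rw [hw1]) <;> (first | ring1 | contradiction | (exfalso; omega))

lemma key_ident (n : ℕ) (w : ℕ → ℝ) (m : ℕ) : ∀ a : ℕ, a + m + 1 ≤ n → ∀ y : ℕ → ℝ,
    ∑ s ∈ Ico a (a+m+1), y s * (dEnt n w s * y s
        - (if s + 1 < a+m+1 then w s * y (s+1) else 0)
        - (if a < s then w (s-1) * y (s-1) else 0))
      = ∑ s ∈ Ico a (a+m), w s * (y s - y (s+1))^2
        + (if 0 < a then w (a-1) * y a ^ 2 else 0)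
        + (if a + m + 1 < n then w (a+m) * y (a+m) ^ 2 else 0) := by
  induction m with
  | zero =>
    intro a ha y
    have h1 : Ico a (a + 0 + 1) = {a} := by rw [Nat.add_zero, Nat.Ico_succ_singleton]
    have h2 : Ico a (a + 0) = (∅ : Finset ℕ) := by simp
    rw [h1, h2, Finset.sum_singleton, Finset.sum_empty]
    simp only [Nat.add_zero]
    unfold dEnt
    split_ifs <;> (first | ring1 | contradiction | (exfalso; omega))
  | succ m ih =>
    intro a ha y
    have hab : a < a + (m+1) + 1 := by omega
    rw [Finset.sum_eq_sum_Ico_succ_bot hab]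
    have hsplit : ∀ s ∈ Ico (a+1) (a + (m+1) + 1),
        y s * (dEnt n w s * y s
          - (if s + 1 < a+(m+1)+1 then w s * y (s+1) else 0)
          - (if a < s then w (s-1) * y (s-1) else 0))
        = y s * (dEnt n w s * y s
          - (if s + 1 < a+(m+1)+1 then w s * y (s+1) else 0)
          - (if a+1 < s then w (s-1) * y (s-1) else 0))
          + (if s = a + 1 then -(y (a+1) * (w a * y a)) else 0) := by
      intro s hs
      obtain ⟨hs1, hs2⟩ := Finset.mem_Ico.mp hs
      rcases eq_or_ne s (a+1) with h | h
      · subst h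
        rw [if_pos (show a < a + 1 by omega), if_neg (lt_irrefl (a+1)), if_pos rfl]
        have : a + 1 - 1 = a := by omega
        rw [this]; ring
      · rw [if_neg h, if_pos (show a < s by omega), if_pos (show a + 1 < s by omega)]; ring
    rw [Finset.sum_congr rfl hsplit, Finset.sum_add_distrib, Finset.sum_ite_eq',
      if_pos (Finset.mem_Ico.mpr ⟨le_rfl, by omega⟩)]
    have e1 : a + (m+1) + 1 = (a+1) + m + 1 := by omega
    have e2 : a + (m+1) = (a+1) + m := by omega
    simp only [e1, e2]
    rw [ih (a+1) (by omega) y]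
    rw [Finset.sum_eq_sum_Ico_succ_bot (show a < (a+1)+m by omega)]
    rw [if_pos (show a + 1 < (a+1)+m+1 by omega), if_neg (lt_irrefl a),
      if_pos (Nat.succ_pos a)]
    simp only [Nat.add_sub_cancel]
    unfold dEnt
    rw [if_pos (show a + 1 < n by omega)]
    split_ifs <;> (first | ring1 | contradiction | (exfalso; omega))

lemma key_pos (n : ℕ) (w : ℕ → ℝ) (hw : ∀ i, i + 1 < n → 0 < w i)
    (m a : ℕ) (hbn : a + m + 1 ≤ n) (hbdry : 0 < a ∨ a + m + 1 < n) (y : ℕ → ℝ)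
    (hy : ∃ s ∈ Ico a (a+m+1), y s ≠ 0) :
    0 < ∑ s ∈ Ico a (a+m), w s * (y s - y (s+1))^2
        + (if 0 < a then w (a-1) * y a ^ 2 else 0)
        + (if a + m + 1 < n then w (a+m) * y (a+m) ^ 2 else 0) := by
  have hterm : ∀ s ∈ Ico a (a+m), 0 ≤ w s * (y s - y (s+1))^2 := by
    intro s hs
    obtain ⟨h1, h2⟩ := Finset.mem_Ico.mp hs
    exact mul_nonneg (le_of_lt (hw s (by omega))) (sq_nonneg _)
  have hA : 0 ≤ ∑ s ∈ Ico a (a+m), w s * (y s - y (s+1))^2 := Finset.sum_nonneg hterm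
  have hB : 0 ≤ (if 0 < a then w (a-1) * y a ^ 2 else 0) := by
    split_ifs with h
    · exact mul_nonneg (le_of_lt (hw (a-1) (by omega))) (sq_nonneg _)
    · exact le_refl 0
  have hC : 0 ≤ (if a + m + 1 < n then w (a+m) * y (a+m) ^ 2 else 0) := by
    split_ifs with h
    · exact mul_nonneg (le_of_lt (hw (a+m) (by omega))) (sq_nonneg _)
    · exact le_refl 0
  rcases lt_or_eq_of_le (by linarith :
      (0:ℝ) ≤ ∑ s ∈ Ico a (a+m), w s * (y s - y (s+1))^2
        + (if 0 < a then w (a-1) * y a ^ 2 else 0)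
        + (if a + m + 1 < n then w (a+m) * y (a+m) ^ 2 else 0)) with hpos | hzero
  · exact hpos
  exfalso
  have hA0 : ∑ s ∈ Ico a (a+m), w s * (y s - y (s+1))^2 = 0 := by linarith
  have hB0 : (if 0 < a then w (a-1) * y a ^ 2 else 0) = 0 := by linarith
  have hC0 : (if a + m + 1 < n then w (a+m) * y (a+m) ^ 2 else 0) = 0 := by linarith
  have hstep : ∀ s ∈ Ico a (a+m), y s = y (s+1) := by
    intro s hs
    have h0 := (Finset.sum_eq_zero_iff_of_nonneg hterm).mp hA0 s hs
    obtain ⟨h1, h2⟩ := Finset.mem_Ico.mp hs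
    have hws := hw s (by omega)
    have : (y s - y (s+1))^2 = 0 := by
      rcases mul_eq_zero.mp h0 with h | h
      · exact absurd h (ne_of_gt hws)
      · exact h
    have := pow_eq_zero_iff (n := 2) (by norm_num) |>.mp this
    linarith
  have hconst : ∀ s, a ≤ s → s < a + m + 1 → y s = y a := by
    intro s hs
    induction s, hs using Nat.le_induction with
    | base => intro _; rfl
    | succ s hs ih =>
      intro hlt
      have h1 : y s = y (s+1) := hstep s (Finset.mem_Ico.mpr ⟨hs, by omega⟩)
      rw [← h1]
      exact ih (by omega)
  have hya : y a = 0 := by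
    rcases hbdry with h | h
    · rw [if_pos h] at hB0
      have := mul_eq_zero.mp hB0
      rcases this with h' | h'
      · exact absurd h' (ne_of_gt (hw (a-1) (by omega)))
      · have := pow_eq_zero_iff (n := 2) (by norm_num) |>.mp h'
        exact this
    · rw [if_pos h] at hC0
      rcases mul_eq_zero.mp hC0 with h' | h'
      · exact absurd h' (ne_of_gt (hw (a+m) (by omega)))
      · have h2 := pow_eq_zero_iff (n := 2) (by norm_num) |>.mp h'
        have h3 := hconst (a+m) (by omega) (by omega)
        rw [h3] at h2
        exact h2
  obtain ⟨s, hs, hsne⟩ := hy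
  obtain ⟨h1, h2⟩ := Finset.mem_Ico.mp hs
  exact hsne ((hconst s h1 h2).trans hya)

lemma ent_symm (n : ℕ) (w : ℕ → ℝ) (s t : ℕ) : ent n w s t = ent n w t s := by
  unfold ent
  split_ifs <;> (first | rfl | ring1 | contradiction | (exfalso; omega) | (subst_vars; rfl))

lemma pathLaplacian_apply (n : ℕ) (w : ℕ → ℝ) (i j : Fin n) :
    pathLaplacian n w i j = ent n w i.1 j.1 := by
  simp only [pathLaplacian, ent, dEnt, Matrix.of_apply, Fin.ext_iff]

lemma sum_subtype_Ico {n : ℕ} (a b : ℕ) (hbn : b ≤ n) (g : ℕ → ℝ) :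
    ∑ p : {v : Fin n // a ≤ v.1 ∧ v.1 < b}, g p.1.1 = ∑ s ∈ Ico a b, g s :=
  Finset.sum_bij' (fun (p : {v : Fin n // a ≤ v.1 ∧ v.1 < b}) (_ : p ∈ Finset.univ) => (p.1.1 : ℕ))
    (fun (s : ℕ) (hs : s ∈ Ico a b) =>
      (⟨⟨s, lt_of_lt_of_le (Finset.mem_Ico.mp hs).2 hbn⟩, (Finset.mem_Ico.mp hs).1,
        (Finset.mem_Ico.mp hs).2⟩ : {v : Fin n // a ≤ v.1 ∧ v.1 < b}))
    (fun p _ => Finset.mem_Ico.mpr p.2) (fun s hs => Finset.mem_univ _)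
    (fun p _ => rfl) (fun s hs => rfl) (fun p _ => rfl)

lemma block_posdef {n : ℕ} (w : ℕ → ℝ) (hw : ∀ i, i + 1 < n → 0 < w i)
    (a b : ℕ) (hbn : b ≤ n) (hbdry : 0 < a ∨ b < n) :
    (((pathLaplacian n w).submatrix
        (fun v : {v : Fin n // a ≤ v.1 ∧ v.1 < b} => (v : Fin n))
        (fun v : {v : Fin n // a ≤ v.1 ∧ v.1 < b} => (v : Fin n)))).PosDef := by
  rw [Matrix.posDef_iff_dotProduct_mulVec]
  constructor
  · ext p q
    simp only [Matrix.conjTranspose_apply, Matrix.submatrix_apply, pathLaplacian_apply,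
      star_trivial]
    exact ent_symm n w q.1.1 p.1.1
  · intro x hx
    obtain ⟨p₀, hp₀⟩ := Function.ne_iff.mp hx
    have hp₀' : x p₀ ≠ 0 := hp₀
    set y : ℕ → ℝ := fun s => ∑ q : {v : Fin n // a ≤ v.1 ∧ v.1 < b},
      (if q.1.1 = s then x q else 0) with hy
    have hy_eval : ∀ q : {v : Fin n // a ≤ v.1 ∧ v.1 < b}, y q.1.1 = x q := by
      intro q
      show (∑ q' : {v : Fin n // a ≤ v.1 ∧ v.1 < b}, if q'.1.1 = q.1.1 then x q' else 0) = x q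
      rw [Finset.sum_eq_single q]
      · rw [if_pos rfl]
      · intro q' _ hne
        rw [if_neg (fun h => hne (Subtype.ext (Fin.ext h)))]
      · intro h
        exact absurd (Finset.mem_univ q) h
    have hQ : (star x) ⬝ᵥ ((((pathLaplacian n w).submatrix
        (fun v : {v : Fin n // a ≤ v.1 ∧ v.1 < b} => (v : Fin n))
        (fun v : {v : Fin n // a ≤ v.1 ∧ v.1 < b} => (v : Fin n)))) *ᵥ x)
        = ∑ s ∈ Ico a b, y s * ∑ t ∈ Ico a b, ent n w s t * y t := by
      rw [← sum_subtype_Ico a b hbn (fun s => y s * ∑ t ∈ Ico a b, ent n w s t * y t)]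
      simp only [dotProduct, Matrix.mulVec, Pi.star_apply, star_trivial]
      apply Finset.sum_congr rfl
      intro p _
      rw [hy_eval p]
      congr 1
      rw [← sum_subtype_Ico a b hbn (fun t => ent n w p.1.1 t * y t)]
      apply Finset.sum_congr rfl
      intro q _
      rw [hy_eval q, Matrix.submatrix_apply, pathLaplacian_apply]
    rw [hQ]
    have hab : a < b := lt_of_le_of_lt p₀.2.1 p₀.2.2
    obtain ⟨m, rfl⟩ : ∃ m, b = a + m + 1 := ⟨b - a - 1, by omega⟩
    have hrows : ∀ s ∈ Ico a (a+m+1), y s * ∑ t ∈ Ico a (a+m+1), ent n w s t * y t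
        = y s * (dEnt n w s * y s - (if s + 1 < a+m+1 then w s * y (s+1) else 0)
          - (if a < s then w (s-1) * y (s-1) else 0)) := by
      intro s hs
      rw [row_sum n w a (a+m+1) y hs]
    rw [Finset.sum_congr rfl hrows, key_ident n w m a hbn y]
    exact key_pos n w hw m a hbn (by omega) y
      ⟨p₀.1.1, Finset.mem_Ico.mpr p₀.2, by rw [hy_eval p₀]; exact hp₀'⟩

section Comb

variable {n k : ℕ}

/-- number of leaders strictly below `v` -/
def idx (ℓ : Fin k → Fin n) (v : Fin n) : Fin (k+1) :=
  ⟨(Finset.univ.filter fun j => (ℓ j).1 < v.1).card,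
    Nat.lt_succ_of_le (le_trans (Finset.card_filter_le Finset.univ fun j => (ℓ j).1 < v.1) (by simp))⟩

lemma card_filter_lt_le (m : ℕ) :
    (Finset.univ.filter fun j : Fin k => j.1 < m).card ≤ m := by
  have h : ((Finset.univ.filter fun j : Fin k => j.1 < m)).card ≤ (Finset.range m).card := by
    apply Finset.card_le_card_of_injOn (fun j : Fin k => j.1)
    · intro j hj
      exact Finset.mem_range.mpr (Finset.mem_filter.mp hj).2
    · intro j _ j' _ h
      exact Fin.ext h
  simpa using h

lemma card_filter_lt (m : ℕ) (hm : m ≤ k) :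
    (Finset.univ.filter fun j : Fin k => j.1 < m).card = m := by
  refine le_antisymm (card_filter_lt_le m) ?_
  rcases Nat.eq_zero_or_pos m with h0 | h0
  · omega
  have hk : 0 < k := by omega
  have h2 : (Finset.range m).card ≤ (Finset.univ.filter fun j : Fin k => j.1 < m).card := by
    apply Finset.card_le_card_of_injOn
      (fun s : ℕ => if h : s < k then (⟨s, h⟩ : Fin k) else ⟨0, hk⟩)
    · intro s hs
      have hsm : s < m := Finset.mem_range.mp hs
      simp only [dif_pos (show s < k by omega)]
      exact Finset.mem_filter.mpr ⟨Finset.mem_univ _, hsm⟩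
    · intro s hs s' hs' h
      have hsm : s < m := by simpa using hs
      have hsm' : s' < m := by simpa using hs'
      simp only [dif_pos (show s < k by omega), dif_pos (show s' < k by omega)] at h
      simpa using congrArg Fin.val h
  simpa using h2

variable {ℓ : Fin k → Fin n}

lemma lemA (hmono : StrictMono ℓ) (i : Fin (k+1)) (u : Fin n)
    (h2 : u.1 < blockHi ℓ i) (j : Fin k) (hj : (ℓ j).1 < u.1) : j.1 < i.1 := by
  by_contra h
  push_neg at h
  have hik : i.1 < k := lt_of_le_of_lt h j.2
  rw [blockHi, dif_pos hik] at h2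
  have : (ℓ ⟨i.1, hik⟩).1 ≤ (ℓ j).1 := hmono.monotone (by simpa [Fin.le_def] using h)
  omega

lemma lemB (hmono : StrictMono ℓ) (i : Fin (k+1)) (u : Fin n)
    (h1 : blockLo ℓ i ≤ u.1) (j : Fin k) (hj : j.1 < i.1) : (ℓ j).1 < u.1 := by
  have hi0 : i.1 ≠ 0 := by omega
  rw [blockLo, dif_neg hi0] at h1
  have : (ℓ j).1 ≤ (ℓ ⟨i.1 - 1, by have := i.2; omega⟩).1 :=
    hmono.monotone (by simp [Fin.le_def]; omega)
  omega

lemma idx_spec (hmono : StrictMono ℓ) (i : Fin (k+1)) (u : Fin n)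
    (h1 : blockLo ℓ i ≤ u.1) (h2 : u.1 < blockHi ℓ i) : idx ℓ u = i := by
  apply Fin.ext
  show (Finset.univ.filter fun j => (ℓ j).1 < u.1).card = i.1
  rw [Finset.filter_congr (fun j _ => by
    constructor
    · exact lemA hmono i u h2 j
    · exact lemB hmono i u h1 j)]
  exact card_filter_lt i.1 (by have := i.2; omega)

lemma block_not_leader (hmono : StrictMono ℓ) (i : Fin (k+1)) (u : Fin n)
    (h1 : blockLo ℓ i ≤ u.1) (h2 : u.1 < blockHi ℓ i) :
    u ∉ Finset.image ℓ Finset.univ := by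
  intro hmem
  obtain ⟨j, _, hj⟩ := Finset.mem_image.mp hmem
  rcases lt_or_ge j.1 i.1 with h | h
  · have := lemB hmono i u h1 j h
    rw [hj] at this
    omega
  · have hik : i.1 < k := lt_of_le_of_lt h j.2
    rw [blockHi, dif_pos hik] at h2
    have : (ℓ ⟨i.1, hik⟩).1 ≤ (ℓ j).1 := hmono.monotone (by simpa [Fin.le_def] using h)
    rw [hj] at this
    omega

lemma adj_idx (v u : Fin n) (hv : v ∉ Finset.image ℓ Finset.univ)
    (hadj : u.1 = v.1 + 1) : idx ℓ v = idx ℓ u := by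
  apply Fin.ext
  show (Finset.univ.filter fun j => (ℓ j).1 < v.1).card
      = (Finset.univ.filter fun j => (ℓ j).1 < u.1).card
  congr 1
  apply Finset.filter_congr
  intro j _
  have hne : (ℓ j).1 ≠ v.1 := by
    intro h
    exact hv (Finset.mem_image.mpr ⟨j, Finset.mem_univ _, Fin.ext h⟩)
  constructor <;> intro <;> omega

lemma zero_offdiag (w : ℕ → ℝ) (v u : Fin n) (hv : v ∉ Finset.image ℓ Finset.univ)
    (hu : u ∉ Finset.image ℓ Finset.univ) (hne : idx ℓ v ≠ idx ℓ u) :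
    pathLaplacian n w v u = 0 := by
  have h1 : v.1 ≠ u.1 := fun h => hne (by rw [show v = u from Fin.ext h])
  have h2 : u.1 ≠ v.1 + 1 := fun h => hne (adj_idx v u hv h)
  have h3 : v.1 ≠ u.1 + 1 := fun h => hne ((adj_idx u v hu h).symm)
  rw [pathLaplacian_apply]
  unfold ent
  rw [if_neg h1, if_neg h2, if_neg (fun h => h3 h)]

end Comb

section Comb2

variable {n k : ℕ} {ℓ : Fin k → Fin n}

lemma follower_mem (hmono : StrictMono ℓ) (v : Fin n)
    (hv : v ∉ Finset.image ℓ Finset.univ) :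
    blockLo ℓ (idx ℓ v) ≤ v.1 ∧ v.1 < blockHi ℓ (idx ℓ v) := by
  have hne : ∀ j : Fin k, (ℓ j).1 ≠ v.1 := by
    intro j h
    exact hv (Finset.mem_image.mpr ⟨j, Finset.mem_univ _, Fin.ext h⟩)
  have hck : (Finset.univ.filter fun j : Fin k => (ℓ j).1 < v.1).card ≤ k := by
    simpa using Finset.card_filter_le Finset.univ fun j : Fin k => (ℓ j).1 < v.1
  constructor
  · rcases Nat.eq_zero_or_pos (idx ℓ v).1 with h0 | h0
    · rw [blockLo, dif_pos h0]
      exact Nat.zero_le _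
    · have hc1 : 1 ≤ (Finset.univ.filter fun j : Fin k => (ℓ j).1 < v.1).card := h0
      have hck1 : (Finset.univ.filter fun j : Fin k => (ℓ j).1 < v.1).card - 1 < k := by omega
      rw [blockLo, dif_neg (by omega)]
      show (ℓ ⟨(Finset.univ.filter fun j : Fin k => (ℓ j).1 < v.1).card - 1, hck1⟩).1 + 1 ≤ v.1
      by_contra hcon
      push_neg at hcon
      have hsub : (Finset.univ.filter fun j : Fin k => (ℓ j).1 < v.1)
          ⊆ (Finset.univ.filter fun j : Fin k =>
              j.1 < (Finset.univ.filter fun j : Fin k => (ℓ j).1 < v.1).card - 1) := by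
        intro j hj
        have hjv : (ℓ j).1 < v.1 := (Finset.mem_filter.mp hj).2
        have hlt : ℓ j < ℓ ⟨(Finset.univ.filter fun j : Fin k => (ℓ j).1 < v.1).card - 1, hck1⟩ := by
          rw [Fin.lt_def]; omega
        have := hmono.lt_iff_lt.mp hlt
        exact Finset.mem_filter.mpr ⟨Finset.mem_univ _, this⟩
      have := le_trans (Finset.card_le_card hsub) (card_filter_lt_le _)
      omega
  · rcases lt_or_ge (idx ℓ v).1 k with hck2 | hck2
    · rw [blockHi, dif_pos hck2]
      show v.1 < (ℓ ⟨(idx ℓ v).1, hck2⟩).1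
      by_contra hcon
      push_neg at hcon
      have hlt : (ℓ ⟨(idx ℓ v).1, hck2⟩).1 < v.1 :=
        lt_of_le_of_ne hcon (hne _)
      have hsub : (Finset.univ.filter fun j : Fin k => j.1 < (idx ℓ v).1 + 1)
          ⊆ (Finset.univ.filter fun j : Fin k => (ℓ j).1 < v.1) := by
        intro j hj
        have hjc : j.1 ≤ (idx ℓ v).1 := by
          have := (Finset.mem_filter.mp hj).2; omega
        have : ℓ j ≤ ℓ ⟨(idx ℓ v).1, hck2⟩ := hmono.monotone (by rw [Fin.le_def]; exact hjc)
        rw [Fin.le_def] at this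
        exact Finset.mem_filter.mpr ⟨Finset.mem_univ _, by omega⟩
      have hge := Finset.card_le_card hsub
      rw [card_filter_lt ((idx ℓ v).1 + 1) (by omega)] at hge
      have : (Finset.univ.filter fun j : Fin k => (ℓ j).1 < v.1).card = (idx ℓ v).1 := rfl
      omega
    · rw [blockHi, dif_neg (by omega)]
      exact v.2

/-- reorganisation of the followers into the inter-leader blocks -/
def blockEquiv (hmono : StrictMono ℓ) :
    {v : Fin n // v ∉ Finset.image ℓ Finset.univ}
      ≃ Σ i : Fin (k+1), {v : Fin n // blockLo ℓ i ≤ v.1 ∧ v.1 < blockHi ℓ i} where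
  toFun v := ⟨idx ℓ v.1, ⟨v.1, (follower_mem hmono v.1 v.2).1, (follower_mem hmono v.1 v.2).2⟩⟩
  invFun x := ⟨x.2.1, block_not_leader hmono x.1 x.2.1 x.2.2.1 x.2.2.2⟩
  left_inv v := rfl
  right_inv x := by
    rcases x with ⟨i, u, hu1, hu2⟩
    have h : idx ℓ u = i := idx_spec hmono i u hu1 hu2
    subst h
    rfl

end Comb2

lemma trace_submatrix_equiv' {α β : Type*} [Fintype α] [Fintype β] (e : α ≃ β)
    (A : Matrix β β ℝ) : Matrix.trace (A.submatrix e e) = Matrix.trace A := by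
  simp only [Matrix.trace, Matrix.diag, Matrix.submatrix_apply]
  exact Equiv.sum_comp e (fun b => A b b)

/-- For a path graph with leader set `{ℓ 0 < ⋯ < ℓ (k-1)}` (`k ≥ 1`), the total
steady-state variance `R(S) = (1/2)tr(L_ff⁻¹)` decomposes as half the sum of the
traces of the inverses of the principal submatrices of `L` indexed by the
intervals between consecutive leaders (0×0 blocks contributing 0). -/
theorem path_variance_decomposition {n k : ℕ} (w : ℕ → ℝ)
    (hw : ∀ i, i + 1 < n → 0 < w i) (hk : 0 < k)
    (ℓ : Fin k → Fin n) (hmono : StrictMono ℓ) :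
    (1 / 2 : ℝ) * Matrix.trace
        (((pathLaplacian n w).submatrix
            (fun a : {v : Fin n // v ∉ Finset.image ℓ Finset.univ} => (a : Fin n))
            (fun a : {v : Fin n // v ∉ Finset.image ℓ Finset.univ} => (a : Fin n)))⁻¹)
      = (1 / 2 : ℝ) * ∑ i : Fin (k + 1),
          Matrix.trace
            (((pathLaplacian n w).submatrix
                (fun a : {v : Fin n // blockLo ℓ i ≤ v.1 ∧ v.1 < blockHi ℓ i} => (a : Fin n))
                (fun a : {v : Fin n // blockLo ℓ i ≤ v.1 ∧ v.1 < blockHi ℓ i} => (a : Fin n)))⁻¹) := by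
  classical
  congr 1
  set D : (i : Fin (k+1)) → Matrix {v : Fin n // blockLo ℓ i ≤ v.1 ∧ v.1 < blockHi ℓ i}
      {v : Fin n // blockLo ℓ i ≤ v.1 ∧ v.1 < blockHi ℓ i} ℝ :=
    fun i => (pathLaplacian n w).submatrix
      (fun a : {v : Fin n // blockLo ℓ i ≤ v.1 ∧ v.1 < blockHi ℓ i} => (a : Fin n))
      (fun a : {v : Fin n // blockLo ℓ i ≤ v.1 ∧ v.1 < blockHi ℓ i} => (a : Fin n)) with hD
  set e := blockEquiv hmono with he
  have hgen : ∀ (x z : Σ i : Fin (k+1), {v : Fin n // blockLo ℓ i ≤ v.1 ∧ v.1 < blockHi ℓ i}),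
      x.1 = z.1 → Matrix.blockDiagonal' D x z = pathLaplacian n w x.2.1 z.2.1 := by
    rintro ⟨i, a⟩ ⟨j, b⟩ h
    cases h
    rw [Matrix.blockDiagonal'_apply_eq]
    rfl
  have hne0 : ∀ (x z : Σ i : Fin (k+1), {v : Fin n // blockLo ℓ i ≤ v.1 ∧ v.1 < blockHi ℓ i}),
      x.1 ≠ z.1 → Matrix.blockDiagonal' D x z = 0 := by
    rintro ⟨i, a⟩ ⟨j, b⟩ h
    exact Matrix.blockDiagonal'_apply_ne D a b h
  have hblockmat : (pathLaplacian n w).submatrix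
      (fun a : {v : Fin n // v ∉ Finset.image ℓ Finset.univ} => (a : Fin n))
      (fun a : {v : Fin n // v ∉ Finset.image ℓ Finset.univ} => (a : Fin n))
      = (Matrix.blockDiagonal' D).submatrix e e := by
    ext p q
    rw [Matrix.submatrix_apply, Matrix.submatrix_apply]
    rcases eq_or_ne (idx ℓ p.1) (idx ℓ q.1) with h | h
    · rw [hgen (e p) (e q) h]
      rfl
    · rw [hne0 (e p) (e q) h]
      exact zero_offdiag w p.1 q.1 p.2 q.2 h
  have hPD : ∀ i : Fin (k+1), (D i).PosDef := by
    intro i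
    apply block_posdef w hw
    · rw [blockHi]
      split
      · exact le_of_lt (ℓ _).2
      · exact le_refl n
    · rcases Nat.eq_zero_or_pos i.1 with h0 | h0
      · right
        rw [blockHi, dif_pos (show i.1 < k by omega)]
        exact (ℓ _).2
      · left
        rw [blockLo, dif_neg (by omega)]
        omega
  have hinv : (Matrix.blockDiagonal' D)⁻¹ = Matrix.blockDiagonal' (fun i => (D i)⁻¹) := by
    apply Matrix.inv_eq_right_inv
    rw [← Matrix.blockDiagonal'_mul]
    rw [show (fun i => D i * (D i)⁻¹)
        = (fun i : Fin (k+1) => (1 : Matrix {v : Fin n // blockLo ℓ i ≤ v.1 ∧ v.1 < blockHi ℓ i}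
          {v : Fin n // blockLo ℓ i ≤ v.1 ∧ v.1 < blockHi ℓ i} ℝ)) from funext fun i =>
        Matrix.mul_nonsing_inv _ ((Matrix.isUnit_iff_isUnit_det (D i)).mp (hPD i).isUnit)]
    exact Matrix.blockDiagonal'_one
  rw [hblockmat, Matrix.inv_submatrix_equiv, trace_submatrix_equiv', hinv,
    Matrix.trace_blockDiagonal']
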